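/- If bounded linear operators A, B on a complex Hilbert space are norm-parallel (there exists λ with |λ| = 1 and ‖A + λB‖ = ‖A‖ + ‖B‖), then ‖A*A + B*B‖ = ‖A‖² + ‖B‖². -/

import Mathlib

open ContinuousLinearMap

theorem stmt16 {H : Type*} [NormedAddCommGroup H] [InnerProductSpace ℂ H] [CompleteSpace H]
    (A B : H →L[ℂ] H)
    (h : ∃ lam : ℂ, ‖lam‖ = 1 ∧ ‖A + lam • B‖ = ‖A‖ + ‖B‖) :
    ‖adjoint A * A + adjoint B * B‖ = ‖A‖ ^ 2 + ‖B‖ ^ 2 := by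
  obtain ⟨lam, hlam, hnorm⟩ := h
  set T := adjoint A * A + adjoint B * B with hT
  have hub : ‖T‖ ≤ ‖A‖ ^ 2 + ‖B‖ ^ 2 := by
    calc ‖T‖ ≤ ‖adjoint A * A‖ + ‖adjoint B * B‖ := norm_add_le _ _
    _ = ‖A‖ ^ 2 + ‖B‖ ^ 2 := by
        rw [ContinuousLinearMap.mul_def, ContinuousLinearMap.mul_def, norm_adjoint_comp_self, norm_adjoint_comp_self]; ring
  have hlb : ‖A‖ ^ 2 + ‖B‖ ^ 2 ≤ ‖T‖ := by
    apply le_of_forall_pos_le_add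
    intro δ hδ
    set ε : ℝ := δ / (2 * (‖A‖ + ‖B‖) + 2) with hε
    have hεpos : 0 < ε := by
      apply div_pos hδ
      nlinarith [norm_nonneg A, norm_nonneg B]
    obtain ⟨x, hx1, hx2⟩ := exists_lt_apply_of_lt_opNorm (A + lam • B)
      (show ‖A + lam • B‖ - ε < ‖A + lam • B‖ by linarith)
    have hxle : ‖x‖ ≤ 1 := le_of_lt hx1
    have hAx : ‖A x‖ ≤ ‖A‖ := by
      calc ‖A x‖ ≤ ‖A‖ * ‖x‖ := A.le_opNorm x
      _ ≤ ‖A‖ * 1 := by gcongr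
      _ = ‖A‖ := mul_one _
    have hBx : ‖B x‖ ≤ ‖B‖ := by
      calc ‖B x‖ ≤ ‖B‖ * ‖x‖ := B.le_opNorm x
      _ ≤ ‖B‖ * 1 := by gcongr
      _ = ‖B‖ := mul_one _
    have hsum : ‖A‖ + ‖B‖ - ε < ‖A x‖ + ‖B x‖ := by
      have h1 : ‖(A + lam • B) x‖ ≤ ‖A x‖ + ‖B x‖ := by
        rw [add_apply, smul_apply]
        calc ‖A x + lam • B x‖ ≤ ‖A x‖ + ‖lam • B x‖ := norm_add_le _ _
        _ = ‖A x‖ + ‖B x‖ := by rw [norm_smul, hlam, one_mul]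
      rw [hnorm] at hx2
      linarith
    -- key: ‖A x‖² + ‖B x‖² ≤ ‖T‖
    have hkey : ‖A x‖ ^ 2 + ‖B x‖ ^ 2 ≤ ‖T‖ := by
      have hre : (RCLike.re (inner ℂ x (T x) : ℂ)) = ‖A x‖ ^ 2 + ‖B x‖ ^ 2 := by
        rw [hT, add_apply, inner_add_right, map_add, ContinuousLinearMap.mul_apply, ContinuousLinearMap.mul_apply,
          adjoint_inner_right, adjoint_inner_right, inner_self_eq_norm_sq,
          inner_self_eq_norm_sq]
      have h2 : (RCLike.re (inner ℂ x (T x) : ℂ)) ≤ ‖(inner ℂ x (T x) : ℂ)‖ :=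
        RCLike.re_le_norm _
      have h3 : ‖(inner ℂ x (T x) : ℂ)‖ ≤ ‖x‖ * ‖T x‖ := norm_inner_le_norm _ _
      have h4 : ‖T x‖ ≤ ‖T‖ * ‖x‖ := T.le_opNorm x
      have h5 : ‖x‖ * ‖T x‖ ≤ ‖T‖ := by
        calc ‖x‖ * ‖T x‖ ≤ 1 * (‖T‖ * ‖x‖) := by
              apply mul_le_mul hxle h4 (norm_nonneg _) zero_le_one
        _ ≤ 1 * (‖T‖ * 1) := by gcongr
        _ = ‖T‖ := by ring
      linarith [hre ▸ le_trans h2 (le_trans h3 h5)]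
    have hεδ : 2 * ε * (‖A‖ + ‖B‖) ≤ δ := by
      have : ε * (2 * (‖A‖ + ‖B‖) + 2) = δ := by
        rw [hε, div_mul_cancel₀]
        positivity
      nlinarith [hεpos.le]
    nlinarith [hAx, hBx, hsum, hkey, norm_nonneg A, norm_nonneg B, norm_nonneg (A x), norm_nonneg (B x), hεpos.le]
  linarith
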